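/- For all natural numbers n ≥ 2, u(n) = ∑_{m=0}^{⌊n/3⌋} C(⌊n/3⌋, m) · u(n − ⌊n/3⌋ − 2m), where C denotes the binomial coefficient and u is extended to negative indices by u(k) = u(k+3) − u(k+2). -/

import Mathlib

theorem narayana_key (u : ℤ → ℤ)
    (hrec : ∀ k : ℤ, u (k + 3) = u (k + 2) + u k) :
    ∀ j : ℕ, ∀ x : ℤ,
      ∑ m ∈ Finset.range (j + 1), (Nat.choose j m : ℤ) * u (x - j - 2 * m) = u x := by
  intro j
  induction j with
  | zero => intro x; simp
  | succ j ih =>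
    intro x
    have h := Finset.sum_choose_succ_mul (fun m _ => u (x - (j + 1 : ℕ) - 2 * m)) j
    rw [show j + 1 + 1 = j + 2 from rfl, h]
    have e1 : ∀ m : ℕ, x - ((j:ℤ) + 1) - 2 * m = (x - 1) - j - 2 * m := by intro m; ring
    have e2 : ∀ m : ℕ, x - ((j:ℤ) + 1) - 2 * (m + 1) = (x - 3) - j - 2 * m := by
      intro m; push_cast; ring
    have s1 : ∑ m ∈ Finset.range (j + 1), (Nat.choose j m : ℤ) *
        u (x - ((j:ℕ)+1) - 2 * m) = u (x - 1) := by
      rw [← ih (x - 1)]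
      apply Finset.sum_congr rfl
      intro m _
      push_cast
      rw [e1 m]
    have s2 : ∑ m ∈ Finset.range (j + 1), (Nat.choose j m : ℤ) *
        u (x - ((j:ℕ)+1) - 2 * ((m:ℕ)+1)) = u (x - 3) := by
      rw [← ih (x - 3)]
      apply Finset.sum_congr rfl
      intro m _
      push_cast
      rw [e2 m]
    push_cast at s1 s2 ⊢
    rw [s1, s2]
    have := hrec (x - 3)
    have hx : x - 3 + 3 = x := by ring
    have hx2 : x - 3 + 2 = x - 1 := by ring
    rw [hx, hx2] at this
    linarith

theorem narayana_binomial_identity (u : ℤ → ℤ)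
    (h0 : u 0 = 0) (h1 : u 1 = 1) (h2 : u 2 = 1)
    (hrec : ∀ k : ℤ, u (k + 3) = u (k + 2) + u k)
    (n : ℕ) (hn : 2 ≤ n) :
    ∑ m ∈ Finset.range (n / 3 + 1),
        (Nat.choose (n / 3) m : ℤ) * u ((n : ℤ) - (n / 3 : ℕ) - 2 * m) = u n := by
  exact narayana_key u hrec (n / 3) n
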